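/- For each n ≥ 0 let φ_n : F_{2^n} → F_{2^{n+1}} be the homomorphism between free groups sending the i-th generator x_i to the commutator [x_{2i}, x_{2i+1}] (0 ≤ i < 2^n), and let ψ_n : F_1 → F_{2^n} denote the composite φ_{n-1} ∘ ⋯ ∘ φ_0. Then for every prime p and every n ≥ 0, the element ψ_n(x₀), the image of the generator of F_1, has no p-th root in F_{2^n}: there is no y ∈ F_{2^n} with y^p = ψ_n(x₀). -/

import Mathlib

open scoped commutatorElement

/-- The homomorphism `F_n → F_{2n}` sending the `i`-th generator `xᵢ` to the
commutator `⁅x_{2i}, x_{2i+1}⁆`. -/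
noncomputable def phi (n : ℕ) : FreeGroup (Fin n) →* FreeGroup (Fin (2 * n)) :=
  FreeGroup.lift fun i =>
    ⁅FreeGroup.of (⟨2 * (i : ℕ), by have := i.isLt; omega⟩ : Fin (2 * n)),
     FreeGroup.of (⟨2 * (i : ℕ) + 1, by have := i.isLt; omega⟩ : Fin (2 * n))⁆

/-- Re-indexing isomorphism of free groups along an equality of the number of
generators. -/
noncomputable def castHom {m k : ℕ} (h : m = k) :
    FreeGroup (Fin m) →* FreeGroup (Fin k) :=
  FreeGroup.lift fun i => FreeGroup.of (Fin.cast h i)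

/-- The composite `ψₙ = φ_{n-1} ∘ ⋯ ∘ φ₀ : F_1 → F_{2^n}`. -/
noncomputable def psi : (n : ℕ) → (FreeGroup (Fin 1) →* FreeGroup (Fin (2 ^ n)))
  | 0 => castHom (by norm_num)
  | n + 1 => (castHom (by ring)).comp ((phi (2 ^ n)).comp (psi n))

open Finsupp List Finset


namespace NPR

variable {p : ℕ}

/-- Truncated convolution product on `List ℕ →₀ ZMod p`, truncating words longer than `N`. -/
noncomputable def conv (N : ℕ) {p : ℕ} (x y : List ℕ →₀ ZMod p) : List ℕ →₀ ZMod p :=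
  Finsupp.onFinset ((x.support ×ˢ y.support).image fun uv => uv.1 ++ uv.2)
    (fun W => if W.length ≤ N then
        ∑ j ∈ Finset.range (W.length + 1), x (W.take j) * y (W.drop j) else 0)
    (by
      intro W hW
      simp only [ne_eq] at hW
      split_ifs at hW with h
      · obtain ⟨j, hj, hne⟩ := Finset.exists_ne_zero_of_sum_ne_zero hW
        simp only [Finset.mem_image, Finset.mem_product]
        exact ⟨⟨W.take j, W.drop j⟩,
          ⟨Finsupp.mem_support_iff.2 (left_ne_zero_of_mul hne),
           Finsupp.mem_support_iff.2 (right_ne_zero_of_mul hne)⟩, List.take_append_drop j W⟩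
      · exact absurd rfl hW)

lemma conv_apply (N : ℕ) (x y : List ℕ →₀ ZMod p) (W : List ℕ) :
    conv N x y W = if W.length ≤ N then
      ∑ j ∈ Finset.range (W.length + 1), x (W.take j) * y (W.drop j) else 0 := rfl

lemma conv_apply_of_le {N : ℕ} {W : List ℕ} (h : W.length ≤ N) (x y : List ℕ →₀ ZMod p) :
    conv N x y W = ∑ j ∈ Finset.range (W.length + 1), x (W.take j) * y (W.drop j) := by
  rw [conv_apply, if_pos h]

lemma conv_apply_of_gt {N : ℕ} {W : List ℕ} (h : N < W.length) (x y : List ℕ →₀ ZMod p) :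
    conv N x y W = 0 := by
  rw [conv_apply, if_neg (by omega)]

lemma conv_ne_zero {N : ℕ} {x y : List ℕ →₀ ZMod p} {W : List ℕ} (h : conv N x y W ≠ 0) :
    W.length ≤ N ∧ ∃ j, j ≤ W.length ∧ x (W.take j) ≠ 0 ∧ y (W.drop j) ≠ 0 := by
  rw [conv_apply] at h
  split_ifs at h with hle
  · obtain ⟨j, hj, hne⟩ := Finset.exists_ne_zero_of_sum_ne_zero h
    exact ⟨hle, j, Nat.lt_succ_iff.1 (Finset.mem_range.1 hj),
      left_ne_zero_of_mul hne, right_ne_zero_of_mul hne⟩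
  · exact absurd rfl h

lemma conv_zero_left (N : ℕ) (y : List ℕ →₀ ZMod p) : conv N 0 y = 0 := by
  ext W; rw [conv_apply]; split_ifs <;> simp

lemma conv_zero_right (N : ℕ) (x : List ℕ →₀ ZMod p) : conv N x 0 = 0 := by
  ext W; rw [conv_apply]; split_ifs <;> simp

lemma conv_add_left (N : ℕ) (x x' y : List ℕ →₀ ZMod p) :
    conv N (x + x') y = conv N x y + conv N x' y := by
  ext W
  rw [Finsupp.add_apply, conv_apply, conv_apply, conv_apply]
  split_ifs with h
  · rw [← Finset.sum_add_distrib]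
    exact Finset.sum_congr rfl fun j _ => by rw [Finsupp.add_apply, add_mul]
  · simp

lemma conv_add_right (N : ℕ) (x y y' : List ℕ →₀ ZMod p) :
    conv N x (y + y') = conv N x y + conv N x y' := by
  ext W
  rw [Finsupp.add_apply, conv_apply, conv_apply, conv_apply]
  split_ifs with h
  · rw [← Finset.sum_add_distrib]
    exact Finset.sum_congr rfl fun j _ => by rw [Finsupp.add_apply, mul_add]
  · simp

lemma conv_single_single (N : ℕ) (u v : List ℕ) (a b : ZMod p) :
    conv N (Finsupp.single u a) (Finsupp.single v b) =
      if (u ++ v).length ≤ N then Finsupp.single (u ++ v) (a * b) else 0 := by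
  ext W
  rw [conv_apply, apply_ite (fun f : List ℕ →₀ ZMod p => f W), Finsupp.zero_apply]
  by_cases hW : W = u ++ v
  · subst hW
    split_ifs with h
    · rw [Finsupp.single_eq_same]
      refine Finset.sum_eq_single_of_mem u.length
        (Finset.mem_range.2 (by simp [Nat.lt_succ_iff])) (fun j hj hne => ?_) |>.trans ?_
      · rcases eq_or_ne ((u ++ v).take j) u with h1 | h1
        · have hlj : j ≤ (u ++ v).length := Nat.lt_succ_iff.1 (Finset.mem_range.1 hj)
          have := congrArg List.length h1
          rw [List.length_take] at this
          exact absurd (by omega) hne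
        · rw [Finsupp.single_eq_of_ne' (Ne.symm h1), zero_mul]
      · rw [List.take_left, List.drop_left, Finsupp.single_eq_same, Finsupp.single_eq_same]
    · simp
  · rw [Finsupp.single_apply, if_neg (Ne.symm hW), ite_self]
    split_ifs with h
    · refine Finset.sum_eq_zero fun j hj => ?_
      rcases eq_or_ne (W.take j) u with h1 | h1
      · rcases eq_or_ne (W.drop j) v with h2 | h2
        · exact absurd (by rw [← h1, ← h2, List.take_append_drop]) hW
        · rw [Finsupp.single_eq_of_ne' (Ne.symm h2), mul_zero]
      · rw [Finsupp.single_eq_of_ne' (Ne.symm h1), zero_mul]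
    · rfl

lemma conv_assoc (N : ℕ) (x y z : List ℕ →₀ ZMod p) :
    conv N (conv N x y) z = conv N x (conv N y z) := by
  induction x using Finsupp.induction_linear with
  | zero => rw [conv_zero_left, conv_zero_left, conv_zero_left]
  | add f g hf hg => rw [conv_add_left, conv_add_left, conv_add_left, hf, hg]
  | single u a =>
    induction y using Finsupp.induction_linear with
    | zero => simp only [conv_zero_left, conv_zero_right]
    | add f g hf hg =>
        rw [conv_add_right, conv_add_left, conv_add_left, conv_add_right, hf, hg]
    | single v b =>
      induction z using Finsupp.induction_linear with
      | zero => simp only [conv_zero_left, conv_zero_right]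
      | add f g hf hg => rw [conv_add_right, conv_add_right, conv_add_right, hf, hg]
      | single w c =>
        rw [conv_single_single, conv_single_single]
        split_ifs with h1 h2 h3
        · rw [conv_single_single, conv_single_single]
          simp only [List.append_assoc, List.length_append, mul_assoc]
        · rw [conv_single_single, conv_zero_right,
            if_neg (by simp only [List.length_append] at h1 h2 ⊢; omega)]
        · rw [conv_zero_left, conv_single_single,
            if_neg (by simp only [List.length_append] at h1 h3 ⊢; omega)]
        · rw [conv_zero_left, conv_zero_right]

/-- The subgroup of series supported on words of length at most `N`. -/
noncomputable def shortV (N p : ℕ) : AddSubgroup (List ℕ →₀ ZMod p) where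
  carrier := {x | ∀ W : List ℕ, N < W.length → x W = 0}
  add_mem' := by
    intro a b ha hb W hW
    rw [Finsupp.add_apply, ha W hW, hb W hW, add_zero]
  zero_mem' := by intro W hW; rfl
  neg_mem' := by intro a ha W hW; rw [Finsupp.neg_apply, ha W hW, neg_zero]

/-- The truncated free (Magnus) algebra. -/
noncomputable def R (N p : ℕ) : Type := shortV N p

noncomputable instance (N p : ℕ) : AddCommGroup (R N p) :=
  inferInstanceAs (AddCommGroup (shortV N p))

namespace R

variable {N : ℕ}

lemma short (x : R N p) : ∀ W : List ℕ, N < W.length → x.1 W = 0 := x.2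

lemma ext' {x y : R N p} (h : x.1 = y.1) : x = y := Subtype.ext h

@[simp] lemma add_val (x y : R N p) : (x + y).1 = x.1 + y.1 := rfl
@[simp] lemma zero_val : (0 : R N p).1 = 0 := rfl
@[simp] lemma neg_val (x : R N p) : (-x).1 = -x.1 := rfl
@[simp] lemma sub_val (x y : R N p) : (x - y).1 = x.1 - y.1 := rfl

noncomputable instance : One (R N p) :=
  ⟨⟨Finsupp.single [] 1, by
    intro W hW
    exact Finsupp.single_eq_of_ne (by rintro rfl; simp at hW)⟩⟩

@[simp] lemma one_val : (1 : R N p).1 = Finsupp.single ([] : List ℕ) 1 := rfl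

noncomputable instance : Mul (R N p) :=
  ⟨fun x y => ⟨conv N x.1 y.1, fun W hW => conv_apply_of_gt hW _ _⟩⟩

@[simp] lemma mul_val (x y : R N p) : (x * y).1 = conv N x.1 y.1 := rfl

protected lemma one_mul (x : R N p) : 1 * x = x := by
  refine ext' (Finsupp.ext fun W => ?_)
  rw [mul_val, one_val, conv_apply]
  split_ifs with h
  · refine Finset.sum_eq_single_of_mem 0 (Finset.mem_range.2 (Nat.succ_pos _))
      (fun j hj hne => ?_) |>.trans ?_
    · rw [Finsupp.single_eq_of_ne, zero_mul]
      intro hemp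
      have := congrArg List.length hemp
      rw [List.length_take] at this
      simp only [List.length_nil] at this
      have := Nat.lt_succ_iff.1 (Finset.mem_range.1 hj)
      omega
    · rw [List.take_zero, List.drop_zero, Finsupp.single_eq_same, one_mul]
  · exact (x.short W (by omega)).symm

protected lemma mul_one (x : R N p) : x * 1 = x := by
  refine ext' (Finsupp.ext fun W => ?_)
  rw [mul_val, one_val, conv_apply]
  split_ifs with h
  · refine Finset.sum_eq_single_of_mem W.length (Finset.mem_range.2 (Nat.lt_succ_self _))
      (fun j hj hne => ?_) |>.trans ?_
    · rw [Finsupp.single_eq_of_ne, mul_zero]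
      intro hemp
      have := congrArg List.length hemp
      rw [List.length_drop] at this
      simp only [List.length_nil] at this
      have := Nat.lt_succ_iff.1 (Finset.mem_range.1 hj)
      omega
    · rw [List.take_length, List.drop_length, Finsupp.single_eq_same, mul_one]
  · exact (x.short W (by omega)).symm

noncomputable instance ring : Ring (R N p) :=
 { (inferInstance : AddCommGroup (R N p)) with
  zero_mul := fun x => ext' (conv_zero_left N x.1)
  mul_zero := fun x => ext' (conv_zero_right N x.1)
  mul_assoc := fun x y z => ext' (conv_assoc N x.1 y.1 z.1)
  one_mul := R.one_mul
  mul_one := R.mul_one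
  left_distrib := fun x y z => ext' (conv_add_right N x.1 y.1 z.1)
  right_distrib := fun x y z => ext' (conv_add_left N x.1 y.1 z.1) }

end R

namespace R

variable {N : ℕ}

/-- The generator `Xᵢ` (truncated, so it is `0` when `N = 0`). -/
noncomputable def X (N p : ℕ) (i : ℕ) : R N p :=
  ⟨(Finsupp.single [i] (1 : ZMod p)).filter (fun W => W.length ≤ N), by
    intro W hW
    rw [Finsupp.filter_apply, if_neg (by omega)]⟩

lemma X_val_apply (i : ℕ) (W : List ℕ) :
    (X N p i).1 W = if W = [i] ∧ 1 ≤ N then 1 else 0 := by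
  rw [X, Finsupp.filter_apply]
  by_cases h : W = [i]
  · subst h
    simp only [List.length_cons, List.length_nil, zero_add, Finsupp.single_eq_same, true_and]
  · rw [Finsupp.single_eq_of_ne' (Ne.symm h)]
    simp [h]

lemma X_supp {i : ℕ} {W : List ℕ} (h : (X N p i).1 W ≠ 0) : W = [i] := by
  rw [X_val_apply] at h
  by_contra hne
  rw [if_neg (by tauto)] at h
  exact h rfl

/-- Lower bound for the support lengths of powers. -/
lemma pow_supp {x : R N p} {m : ℕ} (hx : ∀ W : List ℕ, x.1 W ≠ 0 → m ≤ W.length) :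
    ∀ (j : ℕ) (W : List ℕ), (x ^ j).1 W ≠ 0 → j * m ≤ W.length := by
  intro j
  induction j with
  | zero => intro W _; simp
  | succ j ih =>
    intro W hW
    rw [pow_succ, mul_val] at hW
    obtain ⟨hle, i, hi, h1, h2⟩ := conv_ne_zero hW
    have l1 := ih _ h1
    have l2 := hx _ h2
    rw [List.length_take] at l1
    rw [List.length_drop] at l2
    have hmin : j * m ≤ i := le_trans l1 (by omega)
    have hexp : (j + 1) * m = j * m + m := Nat.succ_mul j m
    omega

lemma X_nilpotent (i : ℕ) : (X N p i) ^ (N + 1) = 0 := by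
  refine ext' (Finsupp.ext fun W => ?_)
  rw [zero_val, Finsupp.zero_apply]
  by_contra h
  have h1 := pow_supp (x := X N p i) (m := 1)
    (fun W hW => by rw [X_supp hW]; simp) (N + 1) W h
  have h2 := ((X N p i) ^ (N + 1)).short W (by omega)
  exact h h2

/-- The image of a free group generator: the unit `1 + Xᵢ`. -/
noncomputable def gen (N p : ℕ) (i : ℕ) : (R N p)ˣ :=
  (IsNilpotent.isUnit_one_add ⟨N + 1, X_nilpotent i⟩).unit

@[simp] lemma gen_val (i : ℕ) : ((gen N p i : (R N p)ˣ) : R N p) = 1 + X N p i := rfl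

/-- The constant term, as a ring homomorphism. -/
noncomputable def constantTerm (N p : ℕ) : R N p →+* ZMod p where
  toFun x := x.1 []
  map_one' := by
    show (1 : R N p).1 [] = 1
    rw [one_val, Finsupp.single_eq_same]
  map_mul' x y := by
    show (x * y).1 [] = x.1 [] * y.1 []
    rw [mul_val, conv_apply_of_le (by simp)]
    simp
  map_zero' := rfl
  map_add' x y := rfl

end R

/-- The Magnus homomorphism sending generator `i` to `1 + Xᵢ`. -/
noncomputable def magnus (N p : ℕ) : FreeGroup ℕ →* (R N p)ˣ :=
  FreeGroup.lift fun i => R.gen N p i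

lemma magnus_constantTerm (N p : ℕ) (t : FreeGroup ℕ) :
    R.constantTerm N p ((magnus N p t : (R N p)ˣ) : R N p) = 1 := by
  have key : (Units.map (R.constantTerm N p).toMonoidHom).comp (magnus N p) = 1 := by
    refine FreeGroup.ext_hom _ _ fun i => ?_
    refine Units.ext ?_
    show R.constantTerm N p ((magnus N p (FreeGroup.of i) : (R N p)ˣ) : R N p) = 1
    rw [magnus, FreeGroup.lift_apply_of]
    show (((1 + R.X N p i : R N p)).1) [] = 1
    rw [R.add_val, Finsupp.add_apply, R.one_val, Finsupp.single_eq_same, R.X_val_apply,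
      if_neg (by simp), add_zero]
  have h1 : (Units.map (R.constantTerm N p).toMonoidHom) ((magnus N p) t) = 1 := by
    rw [← MonoidHom.comp_apply, key, MonoidHom.one_apply]
  have h2 := congrArg Units.val h1
  simpa using h2

/-- The doubling substitution on the free group on countably many generators. -/
noncomputable def Phi : FreeGroup ℕ →* FreeGroup ℕ :=
  FreeGroup.lift fun i => ⁅FreeGroup.of (2 * i), FreeGroup.of (2 * i + 1)⁆

/-- The nested commutator on the block of `2 ^ k` generators starting at `2 ^ k * a`. -/
noncomputable def nel : ℕ → ℕ → FreeGroup ℕ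
  | 0, a => FreeGroup.of a
  | k + 1, a => ⁅nel k (2 * a), nel k (2 * a + 1)⁆

lemma Phi_nel (k a : ℕ) : Phi (nel k a) = nel (k + 1) a := by
  induction k generalizing a with
  | zero =>
    show Phi (FreeGroup.of a) = ⁅nel 0 (2 * a), nel 0 (2 * a + 1)⁆
    show Phi (FreeGroup.of a) = ⁅FreeGroup.of (2 * a), FreeGroup.of (2 * a + 1)⁆
    rw [Phi, FreeGroup.lift_apply_of]
  | succ k ih =>
    show Phi ⁅nel k (2 * a), nel k (2 * a + 1)⁆ = ⁅nel (k + 1) (2 * a), nel (k + 1) (2 * a + 1)⁆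
    rw [map_commutatorElement, ih, ih]

/-- Embedding of the finitely generated free group. -/
noncomputable def emb (m : ℕ) : FreeGroup (Fin m) →* FreeGroup ℕ :=
  FreeGroup.lift fun i => FreeGroup.of (i : ℕ)

lemma emb_cast {m k : ℕ} (h : m = k) (t : FreeGroup (Fin m)) :
    emb k (castHom h t) = emb m t := by
  have : (emb k).comp (castHom h) = emb m := by
    refine FreeGroup.ext_hom _ _ fun i => ?_
    simp [emb, castHom]
  exact congrArg (fun f : FreeGroup (Fin m) →* FreeGroup ℕ => f t) this

lemma emb_phi (m : ℕ) (t : FreeGroup (Fin m)) :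
    emb (2 * m) (phi m t) = Phi (emb m t) := by
  have : (emb (2 * m)).comp (phi m) = Phi.comp (emb m) := by
    refine FreeGroup.ext_hom _ _ fun i => ?_
    simp only [MonoidHom.comp_apply, phi, emb, Phi, FreeGroup.lift_apply_of,
      map_commutatorElement]
  exact congrArg (fun f : FreeGroup (Fin m) →* FreeGroup ℕ => f t) this

lemma emb_psi (n : ℕ) : emb (2 ^ n) (psi n (FreeGroup.of 0)) = nel n 0 := by
  induction n with
  | zero =>
    show emb (2 ^ 0) (castHom (by norm_num) (FreeGroup.of 0)) = FreeGroup.of 0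
    rw [castHom, FreeGroup.lift_apply_of, emb, FreeGroup.lift_apply_of]
    rfl
  | succ n ih =>
    show emb (2 ^ (n + 1))
      ((castHom (by ring)).comp ((phi (2 ^ n)).comp (psi n)) (FreeGroup.of 0)) = nel (n + 1) 0
    rw [MonoidHom.comp_apply, MonoidHom.comp_apply, emb_cast, emb_phi, ih, Phi_nel]

lemma conv_apply_nil (N : ℕ) (x y : List ℕ →₀ ZMod p) :
    conv N x y [] = x [] * y [] := by
  rw [conv_apply_of_le (by simp)]
  simp

/-- Support property: all words in the support have length at least `d`
and letters in `S`. -/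
def PP (S : Set ℕ) (d : ℕ) (x : List ℕ →₀ ZMod p) : Prop :=
  ∀ W : List ℕ, x W ≠ 0 → d ≤ W.length ∧ ∀ l ∈ W, l ∈ S

lemma PP.mono {S S' : Set ℕ} {d d' : ℕ} {x : List ℕ →₀ ZMod p}
    (h : PP S d x) (hS : S ⊆ S') (hd : d' ≤ d) : PP S' d' x := by
  intro W hW
  obtain ⟨h1, h2⟩ := h W hW
  exact ⟨le_trans hd h1, fun l hl => hS (h2 l hl)⟩

lemma PP.add {S : Set ℕ} {d : ℕ} {x y : List ℕ →₀ ZMod p}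
    (hx : PP S d x) (hy : PP S d y) : PP S d (x + y) := by
  intro W hW
  rw [Finsupp.add_apply] at hW
  rcases eq_or_ne (x W) 0 with h | h
  · exact hy W (by intro h2; rw [h, h2, add_zero] at hW; exact hW rfl)
  · exact hx W h

lemma PP.neg {S : Set ℕ} {d : ℕ} {x : List ℕ →₀ ZMod p}
    (hx : PP S d x) : PP S d (-x) := by
  intro W hW
  rw [Finsupp.neg_apply, neg_ne_zero] at hW
  exact hx W hW

lemma PP.sub {S : Set ℕ} {d : ℕ} {x y : List ℕ →₀ ZMod p}
    (hx : PP S d x) (hy : PP S d y) : PP S d (x - y) := by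
  rw [sub_eq_add_neg]
  exact hx.add hy.neg

lemma PP.convolve {N : ℕ} {S₁ S₂ : Set ℕ} {d₁ d₂ : ℕ} {x y : List ℕ →₀ ZMod p}
    (hx : PP S₁ d₁ x) (hy : PP S₂ d₂ y) : PP (S₁ ∪ S₂) (d₁ + d₂) (conv N x y) := by
  intro W hW
  obtain ⟨hle, j, hj, h1, h2⟩ := conv_ne_zero hW
  obtain ⟨l1, m1⟩ := hx _ h1
  obtain ⟨l2, m2⟩ := hy _ h2
  rw [List.length_take] at l1
  rw [List.length_drop] at l2
  constructor
  · omega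
  · intro l hl
    rw [← List.take_append_drop j W, List.mem_append] at hl
    rcases hl with hl | hl
    · exact Or.inl (m1 l hl)
    · exact Or.inr (m2 l hl)

/-- The support property passes to inverses of units `1 + x`. -/
lemma PP.inv {N : ℕ} {A : (R N p)ˣ} {S : Set ℕ} {d : ℕ} (hd : 1 ≤ d)
    (h : PP S d ((A : R N p) - 1).1) :
    PP S d (((A⁻¹ : (R N p)ˣ) : R N p) - 1).1 := by
  set u : R N p := (A : R N p) - 1 with hu
  set u' : R N p := ((A⁻¹ : (R N p)ˣ) : R N p) - 1 with hu'
  have key : u' = -u - u * u' := by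
    have h2 : 1 + (u + u' + u * u') = 1 := by
      calc 1 + (u + u' + u * u') = (1 + u) * (1 + u') := by noncomm_ring
      _ = 1 := by
        rw [hu, hu']
        simp only [add_sub_cancel]
        exact Units.mul_inv A
    have h4 : u' + (u + u * u') = 0 := by
      have := add_left_cancel (h2.trans (add_zero 1).symm)
      rw [← this]; abel
    exact (eq_neg_of_add_eq_zero_left h4).trans (by abel)
  have keyapp : ∀ W : List ℕ, u'.1 W = -(u.1 W) - conv N u.1 u'.1 W := by
    intro W
    conv_lhs => rw [key]
    rw [R.sub_val, R.neg_val, R.mul_val, Finsupp.sub_apply, Finsupp.neg_apply]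
  have hu0 : u.1 [] = 0 := by
    by_contra hne
    have := (h [] hne).1
    simp only [List.length_nil] at this
    omega
  suffices H : ∀ (m : ℕ) (W : List ℕ), W.length ≤ m → u'.1 W ≠ 0 →
      d ≤ W.length ∧ ∀ l ∈ W, l ∈ S from fun W hW => H W.length W le_rfl hW
  intro m
  induction m with
  | zero =>
    intro W hWl hW
    have hW0 : W = [] := List.length_eq_zero_iff.1 (Nat.le_zero.1 hWl)
    subst hW0
    rw [keyapp, conv_apply_nil, hu0] at hW
    simp at hW
  | succ m ih =>
    intro W hWl hW
    rcases eq_or_ne (u.1 W) 0 with h0 | h0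
    · have hconv : conv N u.1 u'.1 W ≠ 0 := by
        intro hc
        rw [keyapp, h0, hc] at hW
        simp at hW
      obtain ⟨hle, j, hj, h1, h2⟩ := conv_ne_zero hconv
      obtain ⟨l1, m1⟩ := h _ h1
      rw [List.length_take] at l1
      have hj1 : d ≤ j := le_trans l1 (by omega)
      have hdrop_len : (W.drop j).length ≤ m := by
        rw [List.length_drop]
        omega
      obtain ⟨l2, m2⟩ := ih (W.drop j) hdrop_len h2
      rw [List.length_drop] at l2
      refine ⟨by omega, fun l hl => ?_⟩
      rw [← List.take_append_drop j W, List.mem_append] at hl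
      rcases hl with hl | hl
      · exact m1 l hl
      · exact m2 l hl
    · exact h W h0

lemma main (N p : ℕ) (k : ℕ) : ∀ a : ℕ, 2 ^ k ≤ N →
    PP (Set.Ico (2 ^ k * a) (2 ^ k * (a + 1))) (2 ^ k)
      (((magnus N p (nel k a) : (R N p)ˣ) : R N p) - 1).1 ∧
    (∀ W : List ℕ, (((magnus N p (nel k a) : (R N p)ˣ) : R N p) - 1).1 W ≠ 0 →
        W.length = 2 ^ k → W.Nodup) ∧
    (((magnus N p (nel k a) : (R N p)ˣ) : R N p) - 1).1 (List.range' (2 ^ k * a) (2 ^ k)) = 1 := by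
  induction k with
  | zero =>
    intro a hk
    have hval : (((magnus N p (nel 0 a) : (R N p)ˣ) : R N p) - 1) = R.X N p a := by
      show ((magnus N p (FreeGroup.of a) : (R N p)ˣ) : R N p) - 1 = R.X N p a
      rw [magnus, FreeGroup.lift_apply_of, R.gen_val, add_sub_cancel_left]
    rw [hval]
    refine ⟨?_, ?_, ?_⟩
    · intro W hW
      have hWa := R.X_supp hW
      subst hWa
      refine ⟨by simp, fun l hl => ?_⟩
      simp only [List.mem_singleton] at hl
      subst hl
      simp only [Set.mem_Ico, pow_zero, one_mul]
      omega
    · intro W hW _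
      have hWa := R.X_supp hW
      subst hWa
      simp
    · have h1 : List.range' (2 ^ 0 * a) (2 ^ 0) = [a] := by norm_num
      rw [h1, R.X_val_apply, if_pos ⟨rfl, by omega⟩]
  | succ k ih =>
    intro a hk
    have hone : 1 ≤ (2:ℕ) ^ k := Nat.one_le_two_pow
    have hq : (2:ℕ) ^ (k + 1) = 2 ^ k * 2 := pow_succ 2 k
    have hk' : 2 ^ k ≤ N := by omega
    obtain ⟨PA, NA, CA⟩ := ih (2 * a) hk'
    obtain ⟨PB, NB, CB⟩ := ih (2 * a + 1) hk'
    set A := magnus N p (nel k (2 * a)) with hAdef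
    set B := magnus N p (nel k (2 * a + 1)) with hBdef
    set u : R N p := (A : R N p) - 1 with hu
    set v : R N p := (B : R N p) - 1 with hv
    set u' : R N p := ((A⁻¹ : (R N p)ˣ) : R N p) - 1 with hu'
    set v' : R N p := ((B⁻¹ : (R N p)ˣ) : R N p) - 1 with hv'
    set D : R N p := u * v - v * u with hD
    set w : R N p := u' + v' + u' * v' with hw
    -- the basic algebraic decomposition
    have hDecomp : ((magnus N p (nel (k + 1) a) : (R N p)ˣ) : R N p) - 1 = D + D * w := by
      have hG : magnus N p (nel (k + 1) a) = A * B * A⁻¹ * B⁻¹ := by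
        show magnus N p ⁅nel k (2 * a), nel k (2 * a + 1)⁆ = _
        rw [map_commutatorElement]
        rfl
      rw [hG]
      have hAi : (A : R N p) * ((A⁻¹ : (R N p)ˣ) : R N p) = 1 := Units.mul_inv A
      have hBi : (B : R N p) * ((B⁻¹ : (R N p)ˣ) : R N p) = 1 := Units.mul_inv B
      have e1 : ((A * B * A⁻¹ * B⁻¹ : (R N p)ˣ) : R N p)
          = (A : R N p) * (B : R N p) * ((A⁻¹ : (R N p)ˣ) : R N p)
            * ((B⁻¹ : (R N p)ˣ) : R N p) := by
        simp [Units.val_mul]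
      have e2 : D + D * w = ((A : R N p) * (B : R N p) - (B : R N p) * (A : R N p))
          * (((A⁻¹ : (R N p)ˣ) : R N p) * ((B⁻¹ : (R N p)ˣ) : R N p)) := by
        rw [hD, hw, hu, hv, hu', hv']
        noncomm_ring
      have e3 : ((A : R N p) * (B : R N p) - (B : R N p) * (A : R N p))
          * (((A⁻¹ : (R N p)ˣ) : R N p) * ((B⁻¹ : (R N p)ˣ) : R N p))
          = (A : R N p) * (B : R N p) * ((A⁻¹ : (R N p)ˣ) : R N p)
            * ((B⁻¹ : (R N p)ˣ) : R N p)
            - (B : R N p) * ((A : R N p) * ((A⁻¹ : (R N p)ˣ) : R N p))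
            * ((B⁻¹ : (R N p)ˣ) : R N p) := by
        noncomm_ring
      rw [e1, e2, e3, hAi, mul_one, hBi]
    -- support properties
    have hSbig1 : Set.Ico (2 ^ k * (2 * a)) (2 ^ k * (2 * a + 1))
        ⊆ Set.Ico (2 ^ (k + 1) * a) (2 ^ (k + 1) * (a + 1)) := by
      apply Set.Ico_subset_Ico
      · apply le_of_eq; rw [hq]; ring
      · rw [hq]; nlinarith
    have hSbig2 : Set.Ico (2 ^ k * (2 * a + 1)) (2 ^ k * (2 * a + 1 + 1))
        ⊆ Set.Ico (2 ^ (k + 1) * a) (2 ^ (k + 1) * (a + 1)) := by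
      apply Set.Ico_subset_Ico
      · rw [hq]; nlinarith
      · apply le_of_eq; rw [hq]; ring
    have hdisj : ∀ l : ℕ, l ∈ Set.Ico (2 ^ k * (2 * a)) (2 ^ k * (2 * a + 1)) →
        l ∈ Set.Ico (2 ^ k * (2 * a + 1)) (2 ^ k * (2 * a + 1 + 1)) → False := by
      intro l h1 h2
      simp only [Set.mem_Ico] at h1 h2
      omega
    have PPu' : PP (Set.Ico (2 ^ k * (2 * a)) (2 ^ k * (2 * a + 1))) (2 ^ k) u'.1 :=
      PP.inv hone PA
    have PPv' : PP (Set.Ico (2 ^ k * (2 * a + 1)) (2 ^ k * (2 * a + 1 + 1))) (2 ^ k) v'.1 :=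
      PP.inv hone PB
    have PPD : PP (Set.Ico (2 ^ (k + 1) * a) (2 ^ (k + 1) * (a + 1))) (2 ^ (k + 1)) D.1 := by
      have h1 := (PA.convolve (N := N) PB).mono (Set.union_subset hSbig1 hSbig2)
        (le_of_eq (show (2:ℕ) ^ (k + 1) = 2 ^ k + 2 ^ k by omega))
      have h2 := (PB.convolve (N := N) PA).mono (Set.union_subset hSbig2 hSbig1)
        (le_of_eq (show (2:ℕ) ^ (k + 1) = 2 ^ k + 2 ^ k by omega))
      exact h1.sub h2
    have PPw : PP (Set.Ico (2 ^ (k + 1) * a) (2 ^ (k + 1) * (a + 1))) (2 ^ k) w.1 := by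
      have h1 := PPu'.mono hSbig1 le_rfl
      have h2 := PPv'.mono hSbig2 le_rfl
      have h3 := (PPu'.convolve (N := N) PPv').mono (Set.union_subset hSbig1 hSbig2)
        (show (2:ℕ) ^ k ≤ 2 ^ k + 2 ^ k by omega)
      exact (h1.add h2).add h3
    have PPDw : PP (Set.Ico (2 ^ (k + 1) * a) (2 ^ (k + 1) * (a + 1)))
        (2 ^ (k + 1) + 2 ^ k) ((D * w).1) := by
      have := (PPD.convolve (N := N) PPw).mono
        (by rw [Set.union_self]) le_rfl
      exact this
    refine ⟨?_, ?_, ?_⟩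
    · -- part 1
      rw [hDecomp]
      exact PPD.add (PPDw.mono subset_rfl (by omega))
    · -- part 2: nodup
      intro W hW hlen
      rw [hDecomp, R.add_val, Finsupp.add_apply] at hW
      have hzero : (D * w).1 W = 0 := by
        by_contra hne
        have := (PPDw W hne).1
        omega
      rw [hzero, add_zero, hD, R.sub_val, Finsupp.sub_apply, R.mul_val, R.mul_val] at hW
      have hcases : conv N u.1 v.1 W ≠ 0 ∨ conv N v.1 u.1 W ≠ 0 := by
        by_contra hcon
        push_neg at hcon
        rw [hcon.1, hcon.2] at hW
        simp at hW
      have key : ∀ (x y : R N p) (T₁ T₂ : Set ℕ),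
          (∀ l : ℕ, l ∈ T₁ → l ∈ T₂ → False) →
          PP T₁ (2 ^ k) x.1 → PP T₂ (2 ^ k) y.1 →
          (∀ W : List ℕ, x.1 W ≠ 0 → W.length = 2 ^ k → W.Nodup) →
          (∀ W : List ℕ, y.1 W ≠ 0 → W.length = 2 ^ k → W.Nodup) →
          conv N x.1 y.1 W ≠ 0 → W.Nodup := by
        intro x y T₁ T₂ hdj Px Py Nx Ny hne
        obtain ⟨hle, j, hj, h1, h2⟩ := conv_ne_zero hne
        have l1 := (Px _ h1).1
        have l2 := (Py _ h2).1
        rw [List.length_take] at l1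
        rw [List.length_drop] at l2
        have hj2 : j = 2 ^ k := by omega
        have n1 : (W.take j).Nodup := Nx _ h1 (by rw [List.length_take]; omega)
        have n2 : (W.drop j).Nodup := Ny _ h2 (by rw [List.length_drop]; omega)
        rw [← List.take_append_drop j W]
        refine n1.append n2 ?_
        intro l hl1 hl2
        exact hdj l ((Px _ h1).2 l hl1) ((Py _ h2).2 l hl2)
      rcases hcases with hne | hne
      · exact key u v _ _ hdisj PA PB NA NB hne
      · exact key v u _ _ (fun l a b => hdisj l b a) PB PA NB NA hne
    · -- part 3: the leading coefficient
      have hW0len : (List.range' (2 ^ (k + 1) * a) (2 ^ (k + 1))).length = 2 ^ (k + 1) :=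
        List.length_range'
      rw [hDecomp, R.add_val, Finsupp.add_apply]
      have hzero : (D * w).1 (List.range' (2 ^ (k + 1) * a) (2 ^ (k + 1))) = 0 := by
        by_contra hne
        have := (PPDw _ hne).1
        rw [hW0len] at this
        omega
      rw [hzero, add_zero, hD, R.sub_val, Finsupp.sub_apply, R.mul_val, R.mul_val]
      have hsplit : List.range' (2 ^ (k + 1) * a) (2 ^ (k + 1)) =
          List.range' (2 ^ (k + 1) * a) (2 ^ k) ++
            List.range' (2 ^ (k + 1) * a + 2 ^ k) (2 ^ k) := by
        rw [List.range'_append_1]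
        congr 1
        omega
      have hvu : conv N v.1 u.1 (List.range' (2 ^ (k + 1) * a) (2 ^ (k + 1))) = 0 := by
        rw [conv_apply_of_le (by rw [hW0len]; omega)]
        refine Finset.sum_eq_zero fun j hj => ?_
        rcases eq_or_ne (v.1 ((List.range' (2 ^ (k + 1) * a) (2 ^ (k + 1))).take j)) 0
          with h0 | h0
        · rw [h0, zero_mul]
        · exfalso
          obtain ⟨hl, hmem⟩ := PB _ h0
          rw [List.length_take, hW0len] at hl
          have hj1 : 1 ≤ j := by omega
          have hmem0 : 2 ^ (k + 1) * a ∈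
              (List.range' (2 ^ (k + 1) * a) (2 ^ (k + 1))).take j := by
            obtain ⟨j', rfl⟩ : ∃ j', j = j' + 1 := ⟨j - 1, by omega⟩
            obtain ⟨m', hm'⟩ : ∃ m', 2 ^ (k + 1) = m' + 1 := ⟨2 ^ (k + 1) - 1, by omega⟩
            rw [hm', List.range'_succ, List.take_succ_cons]
            exact List.mem_cons_self
          have := hmem _ hmem0
          simp only [Set.mem_Ico] at this
          have e1 : 2 ^ k * (2 * a + 1) = 2 ^ (k + 1) * a + 2 ^ k := by rw [hq]; ring
          omega
      have huv : conv N u.1 v.1 (List.range' (2 ^ (k + 1) * a) (2 ^ (k + 1))) = 1 := by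
        rw [conv_apply_of_le (by rw [hW0len]; omega), hW0len]
        refine Finset.sum_eq_single_of_mem (2 ^ k)
          (Finset.mem_range.2 (by omega)) (fun j hj hne => ?_) |>.trans ?_
        · by_contra hterm
          have h1 : u.1 ((List.range' (2 ^ (k + 1) * a) (2 ^ (k + 1))).take j) ≠ 0 :=
            left_ne_zero_of_mul hterm
          have h2 : v.1 ((List.range' (2 ^ (k + 1) * a) (2 ^ (k + 1))).drop j) ≠ 0 :=
            right_ne_zero_of_mul hterm
          have l1 := (PA _ h1).1
          have l2 := (PB _ h2).1
          rw [List.length_take, hW0len] at l1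
          rw [List.length_drop, hW0len] at l2
          have := Nat.lt_succ_iff.1 (Finset.mem_range.1 hj)
          exact hne (by omega)
        · rw [hsplit, List.take_left' (List.length_range'),
            List.drop_left' (List.length_range')]
          have e1 : 2 ^ (k + 1) * a = 2 ^ k * (2 * a) := by rw [hq]; ring
          have e2 : 2 ^ (k + 1) * a + 2 ^ k = 2 ^ k * (2 * a + 1) := by rw [hq]; ring
          rw [e2, e1, CA, CB, one_mul]
      rw [huv, hvu, sub_zero]


lemma R.natCast_val (N p : ℕ) (m : ℕ) :
    ((m : R N p)).1 = Finsupp.single ([] : List ℕ) (m : ZMod p) := by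
  induction m with
  | zero => simp
  | succ m ih =>
    rw [Nat.cast_succ, R.add_val, ih, R.one_val, Nat.cast_succ, ← Finsupp.single_add]

instance R.charP (N p : ℕ) [NeZero p] : CharP (R N p) p := by
  constructor
  intro m
  constructor
  · intro h
    have := congrArg (fun x : R N p => x.1 []) h
    simp only [R.natCast_val, Finsupp.single_eq_same, R.zero_val, Finsupp.zero_apply] at this
    exact (ZMod.natCast_eq_zero_iff m p).1 this
  · intro h
    refine R.ext' ?_
    rw [R.natCast_val, (ZMod.natCast_eq_zero_iff m p).2 h, Finsupp.single_zero,
      R.zero_val]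

lemma flatten_replicate_length (j : ℕ) (M : List ℕ) :
    (List.flatten (List.replicate j M)).length = j * M.length := by
  induction j with
  | zero => simp
  | succ j ih =>
    rw [List.replicate_succ, List.flatten_cons, List.length_append, ih, Nat.succ_mul]
    omega

theorem psi_of_zero_has_no_p_root' (p : ℕ) (hp : p.Prime) (n : ℕ) :
    ¬∃ y : FreeGroup (Fin (2 ^ n)), y ^ p = psi n (FreeGroup.of 0) := by
  haveI : Fact p.Prime := ⟨hp⟩
  rintro ⟨y, hy⟩
  have h1 : (magnus (2 ^ n) p (emb (2 ^ n) y)) ^ p = magnus (2 ^ n) p (nel n 0) := by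
    rw [← map_pow, ← map_pow, hy, emb_psi]
  set f := magnus (2 ^ n) p (emb (2 ^ n) y) with hf
  set s : R (2 ^ n) p := (f : R (2 ^ n) p) - 1 with hs
  set c : R (2 ^ n) p := ((magnus (2 ^ n) p (nel n 0) : (R (2 ^ n) p)ˣ) : R (2 ^ n) p) - 1 with hc
  obtain ⟨Pc, Nc, Cc⟩ := main (2 ^ n) p n 0 (le_refl _)
  rw [← hc] at Pc Nc Cc
  have hcs : c = s ^ p := by
    have hval : ((f : R (2 ^ n) p)) ^ p
        = ((magnus (2 ^ n) p (nel n 0) : (R (2 ^ n) p)ˣ) : R (2 ^ n) p) := by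
      rw [← Units.val_pow_eq_pow_val, h1]
    have h2 : (1 + s) ^ p = 1 + c := by
      have e1 : (1 : R (2 ^ n) p) + s = (f : R (2 ^ n) p) := by rw [hs]; abel
      have e2 : (1 : R (2 ^ n) p) + c
          = ((magnus (2 ^ n) p (nel n 0) : (R (2 ^ n) p)ˣ) : R (2 ^ n) p) := by rw [hc]; abel
      rw [e1, e2, hval]
    have h3 : (1 + s) ^ p = 1 + s ^ p := by
      rw [add_pow_char_of_commute p (Commute.one_left s), one_pow]
    exact add_left_cancel (h2.symm.trans h3)
  have hc1 : ((f : R (2 ^ n) p)).1 [] = 1 := magnus_constantTerm (2 ^ n) p (emb (2 ^ n) y)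
  have hs0 : s.1 [] = 0 := by
    rw [hs, R.sub_val, Finsupp.sub_apply, hc1, R.one_val, Finsupp.single_eq_same, sub_self]
  rcases eq_or_ne s 0 with h0 | h0
  · rw [h0, zero_pow hp.ne_zero] at hcs
    rw [hcs, R.zero_val, Finsupp.zero_apply] at Cc
    exact zero_ne_one Cc
  · have hsupp : s.1.support.Nonempty := by
      rw [Finsupp.support_nonempty_iff]
      intro hz
      exact h0 (R.ext' (by rw [hz, R.zero_val]))
    obtain ⟨M, hM, hmin⟩ := s.1.support.exists_min_image List.length hsupp
    have hMne : s.1 M ≠ 0 := Finsupp.mem_support_iff.1 hM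
    have he1 : 1 ≤ M.length := by
      rcases M with _ | ⟨a, M'⟩
      · exact absurd hs0 hMne
      · simp
    have hminlen : ∀ W : List ℕ, s.1 W ≠ 0 → M.length ≤ W.length :=
      fun W hW => hmin W (Finsupp.mem_support_iff.2 hW)
    have hlow := R.pow_supp hminlen
    rcases le_or_gt (p * M.length) (2 ^ n) with hpe | hpe
    · -- compute the coefficient of `M^p` in `s^p`
      have hcoeff : ∀ j : ℕ, j * M.length ≤ 2 ^ n →
          (s ^ j).1 (List.flatten (List.replicate j M)) = (s.1 M) ^ j := by
        intro j
        induction j with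
        | zero =>
          intro _
          rw [pow_zero, pow_zero, R.one_val]
          simp
        | succ j ih =>
          intro hle
          have hstep : (j + 1) * M.length = j * M.length + M.length := Nat.succ_mul j M.length
          have hle' : j * M.length ≤ 2 ^ n := by omega
          have hW : List.flatten (List.replicate (j + 1) M)
              = List.flatten (List.replicate j M) ++ M := by
            rw [List.replicate_succ', List.flatten_append]
            simp
          rw [pow_succ, R.mul_val, hW,
            conv_apply_of_le (by rw [List.length_append, flatten_replicate_length]; omega)]
          rw [List.length_append, flatten_replicate_length]
          refine Finset.sum_eq_single_of_mem (j * M.length)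
            (Finset.mem_range.2 (by omega)) (fun i hi hne => ?_) |>.trans ?_
          · by_contra hterm
            have h1' := hlow j _ (left_ne_zero_of_mul hterm)
            have h2' := hminlen _ (right_ne_zero_of_mul hterm)
            have hlen2 : ((List.replicate j M).flatten ++ M).length
                = j * M.length + M.length := by
              rw [List.length_append, flatten_replicate_length]
            rw [List.length_take, hlen2] at h1'
            rw [List.length_drop, hlen2] at h2'
            have := Nat.lt_succ_iff.1 (Finset.mem_range.1 hi)
            exact hne (by omega)
          · rw [List.take_left' (by rw [flatten_replicate_length]),
              List.drop_left' (by rw [flatten_replicate_length]),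
              ih hle', pow_succ]
      have hcp := hcoeff p hpe
      have hne2 : c.1 (List.flatten (List.replicate p M)) ≠ 0 := by
        rw [hcs, hcp]
        exact pow_ne_zero _ hMne
      have hlen := (Pc _ hne2).1
      rw [flatten_replicate_length] at hlen
      have hpeN : p * M.length = 2 ^ n := le_antisymm hpe hlen
      have hp2 : p = 2 := by
        have hdvd : p ∣ 2 ^ n := ⟨M.length, hpeN.symm⟩
        exact (Nat.prime_dvd_prime_iff_eq hp Nat.prime_two).1 (hp.dvd_of_dvd_pow hdvd)
      subst hp2
      have hnodup := Nc _ hne2 (by rw [flatten_replicate_length]; exact hpeN)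
      have hflat2 : List.flatten (List.replicate 2 M) = M ++ M := by
        show List.flatten (M :: M :: []) = M ++ M
        simp
      rw [hflat2] at hnodup
      obtain ⟨a0, ha0⟩ : ∃ a0, a0 ∈ M := by
        rcases M with _ | ⟨a, M'⟩
        · simp at he1
        · exact ⟨a, List.mem_cons_self⟩
      exact (List.nodup_append.1 hnodup).2.2 a0 ha0 a0 ha0 rfl
    · -- `p * e > N`: the leading coefficient of `c` would vanish
      rw [hcs] at Cc
      have := hlow p _ (by rw [Cc]; exact one_ne_zero)
      rw [List.length_range'] at this
      omega

end NPR

/-- For every prime `p` and every `n`, the image `ψₙ x₀` of the generator of `F_1`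
has no `p`-th root in `F_{2^n}`. -/
theorem psi_of_zero_has_no_p_root (p : ℕ) (hp : p.Prime) (n : ℕ) :
    ¬∃ y : FreeGroup (Fin (2 ^ n)), y ^ p = psi n (FreeGroup.of 0) := by
  exact NPR.psi_of_zero_has_no_p_root' p hp n
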